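/- Let D be a countable dense subset of 2^ω and let μ_0 be the measure on the algebra 𝔄_0 (generated by traces of clopen sets and finite sets) defined by μ_0((C ∩ D) △ F) = λ(C). Then μ_0 is almost strictly positive: for A ∈ 𝔄_0, μ_0(A) = 0 if and only if A is finite. -/

import Mathlib

open MeasureTheory

/-- The algebra 𝔄₀ of subsets of D generated by traces of clopen subsets of
2^ω = ℕ → Bool and finite subsets of D. -/
def alg0 (D : Set (ℕ → Bool)) : Set (Set (ℕ → Bool)) :=
  ⋂₀ {𝔇 : Set (Set (ℕ → Bool)) |
    (∀ C : Set (ℕ → Bool), IsClopen C → C ∩ D ∈ 𝔇) ∧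
    (∀ F : Set (ℕ → Bool), F.Finite → F ⊆ D → F ∈ 𝔇) ∧
    (∀ A ∈ 𝔇, ∀ B ∈ 𝔇, A ∪ B ∈ 𝔇) ∧
    (∀ A ∈ 𝔇, ∀ B ∈ 𝔇, A ∩ B ∈ 𝔇) ∧
    (∀ A ∈ 𝔇, D \ A ∈ 𝔇)}

/-- Every member of 𝔄₀ has a normal form `(C ∩ D) ∆ F`. -/
lemma alg0_repr {D A : Set (ℕ → Bool)} (h : A ∈ alg0 D) :
    ∃ C F : Set (ℕ → Bool), IsClopen C ∧ F.Finite ∧ F ⊆ D ∧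
      A = symmDiff (C ∩ D) F := by
  set S : Set (Set (ℕ → Bool)) :=
    {A | ∃ C F : Set (ℕ → Bool), IsClopen C ∧ F.Finite ∧ F ⊆ D ∧
      A = symmDiff (C ∩ D) F} with hS
  refine h S ⟨?_, ?_, ?_, ?_, ?_⟩
  · intro C hC
    exact ⟨C, ∅, hC, Set.finite_empty, Set.empty_subset _, by simp [symmDiff_def]⟩
  · intro F hF hFD
    exact ⟨∅, F, isClopen_empty, hF, hFD, by simp [symmDiff_def]⟩
  · rintro A ⟨C1, F1, hC1, hF1, hF1D, rfl⟩ B ⟨C2, F2, hC2, hF2, hF2D, rfl⟩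
    set A := symmDiff (C1 ∩ D) F1
    set B := symmDiff (C2 ∩ D) F2
    refine ⟨C1 ∪ C2, symmDiff (A ∪ B) ((C1 ∪ C2) ∩ D), hC1.union hC2, ?_, ?_, ?_⟩
    · refine (hF1.union hF2).subset ?_
      intro x hx
      simp only [A, B, Set.mem_symmDiff, Set.mem_union, Set.mem_inter_iff] at hx ⊢
      tauto
    · intro x hx
      simp only [A, B, Set.mem_symmDiff, Set.mem_union, Set.mem_inter_iff] at hx
      have h1 := hF1D
      have h2 := hF2D
      rcases hx with ⟨hx1, _⟩ | ⟨⟨_, hxD⟩, _⟩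
      · rcases hx1 with (⟨⟨_, hD⟩, _⟩ | ⟨hF, _⟩) | (⟨⟨_, hD⟩, _⟩ | ⟨hF, _⟩)
        · exact hD
        · exact hF1D hF
        · exact hD
        · exact hF2D hF
      · exact hxD
    · rw [symmDiff_comm (A ∪ B), symmDiff_symmDiff_cancel_left]
  · rintro A ⟨C1, F1, hC1, hF1, hF1D, rfl⟩ B ⟨C2, F2, hC2, hF2, hF2D, rfl⟩
    set A := symmDiff (C1 ∩ D) F1
    set B := symmDiff (C2 ∩ D) F2
    refine ⟨C1 ∩ C2, symmDiff (A ∩ B) ((C1 ∩ C2) ∩ D), hC1.inter hC2, ?_, ?_, ?_⟩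
    · refine (hF1.union hF2).subset ?_
      intro x hx
      simp only [A, B, Set.mem_symmDiff, Set.mem_union, Set.mem_inter_iff] at hx ⊢
      tauto
    · intro x hx
      simp only [A, B, Set.mem_symmDiff, Set.mem_union, Set.mem_inter_iff] at hx
      rcases hx with ⟨⟨hx1, _⟩, _⟩ | ⟨⟨_, hxD⟩, _⟩
      · rcases hx1 with ⟨⟨_, hD⟩, _⟩ | ⟨hF, _⟩
        · exact hD
        · exact hF1D hF
      · exact hxD
    · rw [symmDiff_comm (A ∩ B), symmDiff_symmDiff_cancel_left]
  · rintro A ⟨C1, F1, hC1, hF1, hF1D, rfl⟩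
    set A := symmDiff (C1 ∩ D) F1
    refine ⟨C1ᶜ, symmDiff (D \ A) (C1ᶜ ∩ D), hC1.compl, ?_, ?_, ?_⟩
    · refine hF1.subset ?_
      intro x hx
      simp only [A, Set.mem_symmDiff, Set.mem_diff, Set.mem_inter_iff,
        Set.mem_compl_iff] at hx ⊢
      tauto
    · intro x hx
      simp only [A, Set.mem_symmDiff, Set.mem_diff, Set.mem_inter_iff,
        Set.mem_compl_iff] at hx
      rcases hx with ⟨⟨hD, _⟩, _⟩ | ⟨⟨_, hD⟩, _⟩ <;> exact hD
    · rw [symmDiff_comm (D \ A), symmDiff_symmDiff_cancel_left]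

/-- A nonempty open subset of Cantor space contains a cylinder. -/
lemma exists_cylinder_subset {C : Set (ℕ → Bool)} (hC : IsOpen C)
    {x : ℕ → Bool} (hx : x ∈ C) :
    ∃ I : Finset ℕ, {y : ℕ → Bool | ∀ i ∈ I, y i = x i} ⊆ C := by
  rcases isOpen_pi_iff.mp hC x hx with ⟨I, u, hu, hsub⟩
  refine ⟨I, fun y hy => hsub ?_⟩
  intro i hi
  have := hy i hi
  rw [this]
  exact (hu i hi).2

/-- Every cylinder in Cantor space is infinite. -/
lemma cylinder_infinite (I : Finset ℕ) (x : ℕ → Bool) :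
    {y : ℕ → Bool | ∀ i ∈ I, y i = x i}.Infinite := by
  set N := (I.sup id) + 1 with hN
  have hNI : ∀ n : ℕ, N + n ∉ I := by
    intro n hn
    have : N + n ≤ I.sup id := Finset.le_sup (f := id) hn
    omega
  set f : ℕ → (ℕ → Bool) := fun n i => if i ∈ I then x i else decide (i = N + n) with hf
  refine Set.infinite_of_injective_forall_mem (f := f) ?_ ?_
  · intro n m hnm
    have := congrFun hnm (N + n)
    simp only [hf, if_neg (hNI n)] at this
    simp at this
    omega
  · intro n i hi
    simp [hf, if_pos hi]

/-- the measure μ₀((C ∩ D) △ F) = λ(C) on 𝔄₀ is almost strictly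
positive: μ₀(A) = 0 iff A is finite. -/
theorem stmt_9 (lam : Measure (ℕ → Bool))
    (hlam : ∀ (s : Finset ℕ) (σ : ℕ → Bool),
      lam {x | ∀ i ∈ s, x i = σ i} = (1/2 : ENNReal) ^ s.card)
    (D : Set (ℕ → Bool)) (hDc : D.Countable) (hDd : Dense D)
    (μ₀ : Set (ℕ → Bool) → ℝ)
    (hμ₀ : ∀ C F : Set (ℕ → Bool), IsClopen C → F.Finite → F ⊆ D →
      μ₀ (symmDiff (C ∩ D) F) = (lam C).toReal) :
    ∀ A ∈ alg0 D, (μ₀ A = 0 ↔ A.Finite) := by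
  intro A hA
  obtain ⟨C, F, hC, hF, hFD, rfl⟩ := alg0_repr hA
  rw [hμ₀ C F hC hF hFD]
  -- lam C is finite
  have huniv : lam Set.univ = 1 := by
    have := hlam ∅ (fun _ => true)
    simpa using this
  have hle : lam C ≤ 1 := by
    rw [← huniv]; exact measure_mono (Set.subset_univ C)
  have hfin : lam C ≠ ⊤ := by
    intro h; rw [h] at hle; exact (by simp : ¬ (⊤ : ENNReal) ≤ 1) hle
  -- key equivalence: C ∩ D infinite ↔ (C ∩ D) ∆ F infinite
  have hsymm_fin : (symmDiff (C ∩ D) F).Finite ↔ (C ∩ D).Finite := by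
    constructor
    · intro h
      refine (h.union hF).subset ?_
      intro x hx
      by_cases hxF : x ∈ F
      · exact Or.inr hxF
      · exact Or.inl (by simp [Set.mem_symmDiff]; tauto)
    · intro h
      exact (h.union hF).subset (by
        intro x hx
        simp only [Set.mem_symmDiff, Set.mem_union] at hx ⊢
        tauto)
  -- If C is nonempty then C ∩ D is infinite
  have hkey : C.Nonempty → (C ∩ D).Infinite := by
    rintro ⟨x, hx⟩
    obtain ⟨I, hI⟩ := exists_cylinder_subset hC.isOpen hx
    intro hfin'
    -- C is infinite since it contains an infinite cylinder
    have hCinf : C.Infinite := (cylinder_infinite I x).mono hI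
    -- C \ (C ∩ D) is open and nonempty
    have hclosed : IsClosed (C ∩ D : Set (ℕ → Bool)) := hfin'.isClosed
    have hopen : IsOpen (C \ (C ∩ D)) := hC.isOpen.sdiff hclosed
    have hne : (C \ (C ∩ D)).Nonempty := by
      rcases (hCinf.diff hfin').nonempty with ⟨y, hy⟩
      exact ⟨y, hy⟩
    obtain ⟨d, hdD, hd⟩ := hDd.exists_mem_open hopen hne
    exact hd.2 ⟨hd.1, hdD⟩
  constructor
  · -- μ₀ = 0 → finite
    intro h0
    have hlam0 : lam C = 0 := by
      have := (ENNReal.toReal_eq_zero_iff _).mp h0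
      tauto
    rw [hsymm_fin]
    by_contra hinf
    have hCD : (C ∩ D).Infinite := hinf
    obtain ⟨x, hxC, _⟩ := hCD.nonempty
    obtain ⟨I, hI⟩ := exists_cylinder_subset hC.isOpen hxC
    have hpos : lam C ≠ 0 := by
      intro h0'
      have hmono : lam {y : ℕ → Bool | ∀ i ∈ I, y i = x i} ≤ lam C :=
        measure_mono hI
      rw [hlam I x, h0'] at hmono
      have : ((1/2 : ENNReal)) ^ I.card ≠ 0 := by
        apply pow_ne_zero
        simp
      exact this (le_antisymm hmono zero_le')
    exact hpos hlam0
  · -- finite → μ₀ = 0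
    intro hfin'
    have hCD : (C ∩ D).Finite := hsymm_fin.mp hfin'
    have hCempty : lam C = 0 := by
      by_contra hne
      have hCne : C.Nonempty := by
        rcases Set.eq_empty_or_nonempty C with rfl | h
        · exact (hne (by simp)).elim
        · exact h
      exact (hkey hCne) hCD
    simp [hCempty]
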